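/- Let f be a function on [0,1]^d of bounded HK0-variation, and let f₁(x) = V_HK0(f;[0,x]) and f₂(x) = f₁(x) − f(x). Then V_HK0(f₁) = V_HK0(f) and V_HK0(f₂) = V_HK0(f) − f(1) + f(0); in particular both f₁ and f₂ have bounded HK0-variation. -/

import Mathlib

set_option linter.unnecessarySeqFocus false


open MeasureTheory Finset

noncomputable section

/-- The quasi-volume `Δ` of `f` over the box `[a,b]` in the coordinates of `S`;
the coordinates outside `S` are fixed according to the anchor point `p`. -/
def quasiVol {d : ℕ} (f : (Fin d → ℝ) → ℝ) (S : Finset (Fin d)) (p a b : Fin d → ℝ) : ℝ :=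
  ∑ T ∈ S.powerset, (-1 : ℝ) ^ T.card *
    f (fun i => if i ∈ S then (if i ∈ T then a i else b i) else p i)

/-- A grid (a partition generated by one-dimensional partitions of the sides) of the
box `[lo, hi]` in the coordinates of `S`. -/
structure Grid (d : ℕ) (S : Finset (Fin d)) (lo hi : Fin d → ℝ) where
  m : Fin d → ℕ
  t : Fin d → ℕ → ℝ
  mono : ∀ i ∈ S, ∀ j k : ℕ, j ≤ k → k ≤ m i → t i j ≤ t i k
  first : ∀ i ∈ S, t i 0 = lo i
  last : ∀ i ∈ S, t i (m i) = hi i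

/-- The sum, over all cells of a grid, of the absolute value of the quasi-volume of the cell. -/
def gridSum {d : ℕ} (f : (Fin d → ℝ) → ℝ) (S : Finset (Fin d)) (p lo hi : Fin d → ℝ)
    (G : Grid d S lo hi) : ℝ :=
  ∑ k ∈ Fintype.piFinset (fun i => Finset.range (if i ∈ S then G.m i else 1)),
    |quasiVol f S p (fun i => G.t i (k i)) (fun i => G.t i (k i + 1))|

/-- The variation in the sense of Vitali of `f` on the face of the box `[lo, hi]` with active
coordinates `S`, the remaining coordinates being fixed according to the anchor `p`:
the supremum of `gridSum` over all grids. -/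
def vitaliVar {d : ℕ} (f : (Fin d → ℝ) → ℝ) (S : Finset (Fin d)) (p lo hi : Fin d → ℝ) : ℝ :=
  sSup (Set.range (gridSum f S p lo hi))

/-- The Vitali variation on the face `(S, p)` of `[lo, hi]` is bounded (finite). -/
def BddVitali {d : ℕ} (f : (Fin d → ℝ) → ℝ) (S : Finset (Fin d)) (p lo hi : Fin d → ℝ) : Prop :=
  BddAbove (Set.range (gridSum f S p lo hi))

/-- Hardy–Krause-type variation of `f` on the box `[lo, hi]` with anchor `p`: the sum, over all
nonempty sets `S` of coordinates, of the Vitali variation of the restriction of `f` to the face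
of `[lo, hi]` whose coordinates outside `S` are fixed according to `p`. -/
def hkVarOn {d : ℕ} (f : (Fin d → ℝ) → ℝ) (p lo hi : Fin d → ℝ) : ℝ :=
  ∑ S ∈ (Finset.univ : Finset (Fin d)).powerset.erase ∅, vitaliVar f S p lo hi

/-- All the Vitali variations occurring in `hkVarOn` are bounded. -/
def BddHKVarOn {d : ℕ} (f : (Fin d → ℝ) → ℝ) (p lo hi : Fin d → ℝ) : Prop :=
  ∀ S ∈ (Finset.univ : Finset (Fin d)).powerset.erase ∅, BddVitali f S p lo hi

/-- The Hardy–Krause variation of `f` on `[0,1]^d`, anchored at `1`. -/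
def hkVar {d : ℕ} (f : (Fin d → ℝ) → ℝ) : ℝ := hkVarOn f 1 0 1

/-- `f` has bounded Hardy–Krause variation (anchored at `1`). -/
def BddHKVar {d : ℕ} (f : (Fin d → ℝ) → ℝ) : Prop := BddHKVarOn f 1 0 1

/-- The Hardy–Krause variation of `f` on the box `[0, a]`, anchored at `0`. -/
def hkVar0On {d : ℕ} (f : (Fin d → ℝ) → ℝ) (a : Fin d → ℝ) : ℝ := hkVarOn f 0 0 a

/-- The Hardy–Krause variation of `f` on `[0,1]^d`, anchored at `0`. -/
def hkVar0 {d : ℕ} (f : (Fin d → ℝ) → ℝ) : ℝ := hkVarOn f 0 0 1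

/-- `f` has bounded Hardy–Krause variation anchored at `0`. -/
def BddHKVar0 {d : ℕ} (f : (Fin d → ℝ) → ℝ) : Prop := BddHKVarOn f 0 0 1

/-- `f` is completely monotone: every quasi-volume of an axis-parallel box contained in a face
of `[0,1]^d` (coordinates outside the active set `S` being fixed at `0` or `1`) is nonnegative. -/
def CompletelyMonotone {d : ℕ} (f : (Fin d → ℝ) → ℝ) : Prop :=
  ∀ S : Finset (Fin d), S.Nonempty → ∀ p : Fin d → ℝ, (∀ i ∉ S, p i = 0 ∨ p i = 1) →
    ∀ a b : Fin d → ℝ, a ∈ Set.Icc (0 : Fin d → ℝ) 1 → b ∈ Set.Icc (0 : Fin d → ℝ) 1 →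
      a ≤ b → 0 ≤ quasiVol f S p a b

/-- `f` is coordinatewise right-continuous at every point of `[0,1]^d`. -/
def RightCts {d : ℕ} (f : (Fin d → ℝ) → ℝ) : Prop :=
  ∀ x ∈ Set.Icc (0 : Fin d → ℝ) 1, ∀ i : Fin d,
    Filter.Tendsto (fun y : ℝ => f (Function.update x i y))
      (nhdsWithin (x i) (Set.Icc (x i) 1)) (nhds (f x))

/-- The star-discrepancy of the points `x 1, …, x N` with respect to the measure `μ`. -/
def starDisc {d : ℕ} (N : ℕ) (x : Fin N → Fin d → ℝ) (μ : Measure (Fin d → ℝ)) : ℝ :=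
  ⨆ a : Set.Icc (0 : Fin d → ℝ) 1,
    |(∑ n : Fin N, Set.indicator (Set.Icc 0 (a : Fin d → ℝ)) (fun _ => (1 : ℝ)) (x n)) / N
      - (μ (Set.Icc 0 (a : Fin d → ℝ))).toReal|


namespace LeonovAux

variable {d : ℕ}

lemma quasiVol_congr (f : (Fin d → ℝ) → ℝ) (S : Finset (Fin d)) (p a b a' b' : Fin d → ℝ)
    (ha : ∀ i ∈ S, a i = a' i) (hb : ∀ i ∈ S, b i = b' i) :
    quasiVol f S p a b = quasiVol f S p a' b' := by
  unfold quasiVol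
  refine Finset.sum_congr rfl fun T _ => ?_
  congr 1
  congr 1
  funext i
  by_cases hiS : i ∈ S
  · by_cases hiT : i ∈ T <;> simp [hiS, hiT, ha i hiS, hb i hiS]
  · simp [hiS]

lemma quasiVol_sub (g h : (Fin d → ℝ) → ℝ) (S : Finset (Fin d)) (p a b : Fin d → ℝ) :
    quasiVol (fun x => g x - h x) S p a b = quasiVol g S p a b - quasiVol h S p a b := by
  unfold quasiVol
  rw [← Finset.sum_sub_distrib]
  exact Finset.sum_congr rfl fun T _ => by ring

lemma quasiVol_empty (f : (Fin d → ℝ) → ℝ) (p a b : Fin d → ℝ) :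
    quasiVol f ∅ p a b = f p := by
  unfold quasiVol
  simp

lemma quasiVol_degenerate (f : (Fin d → ℝ) → ℝ) (S : Finset (Fin d)) (p a b : Fin d → ℝ)
    {i₀ : Fin d} (hi₀ : i₀ ∈ S) (hab : a i₀ = b i₀) :
    quasiVol f S p a b = 0 := by
  unfold quasiVol
  rw [← Finset.insert_erase hi₀,
    Finset.sum_powerset_insert (Finset.notMem_erase _ _)]
  have key : ∀ T ∈ (S.erase i₀).powerset,
      (-1 : ℝ) ^ (insert i₀ T).card *
        f (fun i => if i ∈ insert i₀ (S.erase i₀) then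
            (if i ∈ insert i₀ T then a i else b i) else p i)
      = -((-1 : ℝ) ^ T.card *
        f (fun i => if i ∈ insert i₀ (S.erase i₀) then
            (if i ∈ T then a i else b i) else p i)) := by
    intro T hT
    have hiT : i₀ ∉ T := fun h =>
      Finset.notMem_erase i₀ S (Finset.mem_powerset.1 hT h)
    rw [Finset.card_insert_of_notMem hiT]
    have harg : (fun i => if i ∈ insert i₀ (S.erase i₀) then
            (if i ∈ insert i₀ T then a i else b i) else p i)
        = (fun i => if i ∈ insert i₀ (S.erase i₀) then
            (if i ∈ T then a i else b i) else p i) := by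
      funext i
      by_cases hie : i = i₀
      · subst hie
        simp [hiT, hab]
      · have : i ∈ insert i₀ T ↔ i ∈ T := by simp [hie]
        simp only [this]
    rw [harg]
    ring
  rw [Finset.sum_congr rfl key, Finset.sum_neg_distrib]
  ring

lemma quasiVol_insert (f : (Fin d → ℝ) → ℝ) {S : Finset (Fin d)} {i : Fin d} (hi : i ∉ S)
    (p a b : Fin d → ℝ) :
    quasiVol f (insert i S) p a b
      = quasiVol f S (Function.update p i (b i)) a b
        - quasiVol f S (Function.update p i (a i)) a b := by
  unfold quasiVol
  rw [Finset.sum_powerset_insert hi]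
  have h1 : ∀ T ∈ S.powerset,
      (-1 : ℝ) ^ T.card * f (fun j => if j ∈ insert i S then
          (if j ∈ T then a j else b j) else p j)
      = (-1 : ℝ) ^ T.card * f (fun j => if j ∈ S then
          (if j ∈ T then a j else b j) else Function.update p i (b i) j) := by
    intro T hT
    have hiT : i ∉ T := fun h => hi (Finset.mem_powerset.1 hT h)
    congr 2
    funext j
    by_cases hje : j = i
    · subst hje; simp [hi, hiT]
    · by_cases hjS : j ∈ S <;> simp [hjS, hje, Function.update_of_ne hje]
  have h2 : ∀ T ∈ S.powerset,
      (-1 : ℝ) ^ (insert i T).card * f (fun j => if j ∈ insert i S then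
          (if j ∈ insert i T then a j else b j) else p j)
      = -((-1 : ℝ) ^ T.card * f (fun j => if j ∈ S then
          (if j ∈ T then a j else b j) else Function.update p i (a i) j)) := by
    intro T hT
    have hiT : i ∉ T := fun h => hi (Finset.mem_powerset.1 hT h)
    rw [Finset.card_insert_of_notMem hiT]
    have : (fun j => if j ∈ insert i S then
          (if j ∈ insert i T then a j else b j) else p j)
        = (fun j => if j ∈ S then
          (if j ∈ T then a j else b j) else Function.update p i (a i) j) := by
      funext j
      by_cases hje : j = i
      · subst hje; simp [hi]
      · have h3 : j ∈ insert i S ↔ j ∈ S := by simp [hje]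
        have h4 : j ∈ insert i T ↔ j ∈ T := by simp [hje]
        simp only [h3, h4, Function.update_of_ne hje]
    rw [this]; ring
  rw [Finset.sum_congr rfl h1, Finset.sum_congr rfl h2, Finset.sum_neg_distrib]
  ring

lemma sum_powerset_neg_one (S : Finset (Fin d)) :
    ∑ T ∈ S.powerset, (-1 : ℝ) ^ T.card = if S = ∅ then 1 else 0 := by
  induction S using Finset.induction with
  | empty => simp
  | @insert i s hi ih =>
    rw [Finset.sum_powerset_insert hi]
    have : ∀ T ∈ s.powerset, (-1 : ℝ) ^ (insert i T).card = -((-1 : ℝ) ^ T.card) := by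
      intro T hT
      have hiT : i ∉ T := fun h => hi (Finset.mem_powerset.1 hT h)
      rw [Finset.card_insert_of_notMem hiT]; ring
    rw [Finset.sum_congr rfl this, Finset.sum_neg_distrib]
    simp [Finset.insert_ne_empty]

end LeonovAux

namespace LeonovAux

variable {d : ℕ}

lemma sum_piFinset_split (G : Fin d → Finset ℕ) (i : Fin d) (F : (Fin d → ℕ) → ℝ) :
    ∑ k ∈ Fintype.piFinset G, F k
      = ∑ j ∈ G i, ∑ k ∈ Fintype.piFinset (Function.update G i {0}),
          F (Function.update k i j) := by
  rw [← Finset.sum_product']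
  refine Finset.sum_nbij' (fun k => (k i, Function.update k i 0))
    (fun p => Function.update p.2 i p.1) ?_ ?_ ?_ ?_ ?_
  · intro k hk
    rw [Fintype.mem_piFinset] at hk
    refine Finset.mem_product.2 ⟨hk i, ?_⟩
    rw [Fintype.mem_piFinset]
    intro j
    by_cases hj : j = i
    · subst hj; simp
    · simp [Function.update_of_ne hj, hk j]
  · intro p hp
    rw [Finset.mem_product, Fintype.mem_piFinset] at hp
    rw [Fintype.mem_piFinset]
    intro j
    by_cases hj : j = i
    · subst hj; simpa using hp.1
    · have := hp.2 j
      simpa [Function.update_of_ne hj] using this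
  · intro k _
    funext j
    by_cases hj : j = i
    · subst hj; simp
    · simp [Function.update_of_ne hj]
  · intro p hp
    rw [Finset.mem_product, Fintype.mem_piFinset] at hp
    have h2 := hp.2 i
    simp only [Function.update_self, Finset.mem_singleton] at h2
    refine Prod.ext ?_ ?_
    · simp
    · simp only
      funext j
      by_cases hj : j = i
      · subst hj; simp [h2]
      · simp [Function.update_of_ne hj]
  · intro k _
    congr 1
    funext j
    by_cases hj : j = i
    · subst hj; simp
    · simp [Function.update_of_ne hj]

lemma sum_piFinset_shift (c n : Fin d → ℕ) (F : (Fin d → ℕ) → ℝ) :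
    ∑ k ∈ Fintype.piFinset (fun i => Finset.Ico (c i) (c i + n i)), F k
      = ∑ k ∈ Fintype.piFinset (fun i => Finset.range (n i)), F (fun i => k i + c i) := by
  refine Finset.sum_nbij' (fun k i => k i - c i) (fun k i => k i + c i) ?_ ?_ ?_ ?_ ?_
  · intro k hk
    simp only [Fintype.mem_piFinset, Finset.mem_Ico] at hk
    simp only [Fintype.mem_piFinset, Finset.mem_range]
    intro i
    have := hk i
    omega
  · intro k hk
    simp only [Fintype.mem_piFinset, Finset.mem_range] at hk
    simp only [Fintype.mem_piFinset, Finset.mem_Ico]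
    intro i
    have := hk i
    omega
  · intro k hk
    simp only [Fintype.mem_piFinset, Finset.mem_Ico] at hk
    funext i
    dsimp only
    have := hk i
    omega
  · intro k hk
    funext i
    dsimp only
    omega
  · intro k hk
    simp only [Fintype.mem_piFinset, Finset.mem_Ico] at hk
    congr 1
    funext i
    dsimp only
    have := hk i
    omega

lemma sum_piFinset_decomp (M N : Fin d → ℕ) (φ : Fin d → ℕ → ℕ)
    (h0 : ∀ i, φ i 0 = 0) (hM : ∀ i, φ i (M i) = N i)
    (hmono : ∀ i, ∀ j k, j ≤ k → k ≤ M i → φ i j ≤ φ i k)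
    (F : (Fin d → ℕ) → ℝ) :
    ∑ k' ∈ Fintype.piFinset (fun i => Finset.range (N i)), F k'
      = ∑ k ∈ Fintype.piFinset (fun i => Finset.range (M i)),
          ∑ k' ∈ Fintype.piFinset (fun i => Finset.Ico (φ i (k i)) (φ i (k i + 1))), F k' := by
  classical
  rw [Finset.sum_sigma']
  set ψ : Fin d → ℕ → ℕ := fun i n => Nat.findGreatest (fun j => φ i j ≤ n) (M i) with hψ
  have hψM : ∀ i n, ψ i n ≤ M i := fun i n => Nat.findGreatest_le (M i)
  have hψ_spec : ∀ i n, φ i (ψ i n) ≤ n := by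
    intro i n
    exact Nat.findGreatest_spec (P := fun j => φ i j ≤ n) (m := 0) (n := M i)
      (Nat.zero_le _) (show φ i 0 ≤ n by rw [h0 i]; exact Nat.zero_le n)
  have hψ_ltM : ∀ i n, n < N i → ψ i n < M i := by
    intro i n hn
    rcases lt_or_eq_of_le (hψM i n) with h | h
    · exact h
    · exfalso
      have := hψ_spec i n
      rw [h, hM i] at this
      omega
  have hψ_lt : ∀ i n, n < N i → n < φ i (ψ i n + 1) := by
    intro i n hn
    by_contra h
    push_neg at h
    exact Nat.findGreatest_is_greatest (P := fun j => φ i j ≤ n) (n := M i)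
      (Nat.lt_succ_self _) (hψ_ltM i n hn) h
  have hψ_eq : ∀ i n j, j < M i → φ i j ≤ n → n < φ i (j + 1) → ψ i n = j := by
    intro i n j hj h1 h2
    have hle : j ≤ ψ i n := Nat.le_findGreatest (P := fun j => φ i j ≤ n) (le_of_lt hj) h1
    rcases lt_or_eq_of_le hle with h | h
    · exfalso
      have : φ i (j + 1) ≤ φ i (ψ i n) := hmono i (j + 1) (ψ i n) h (hψM i n)
      have := hψ_spec i n
      omega
    · omega
  refine (Finset.sum_nbij' (fun x => x.2)
    (fun k' => ⟨fun i => ψ i (k' i), k'⟩) ?_ ?_ ?_ ?_ ?_).symm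
  · intro x hx
    rw [Finset.mem_sigma] at hx
    obtain ⟨h1, h2⟩ := hx
    rw [Fintype.mem_piFinset] at h1 h2 ⊢
    intro i
    have hki := h1 i
    rw [Finset.mem_range] at hki
    have := h2 i
    rw [Finset.mem_Ico] at this
    rw [Finset.mem_range, ← hM i]
    calc x.2 i < φ i (x.1 i + 1) := this.2
      _ ≤ φ i (M i) := hmono i _ _ (by omega) (le_refl _)
  · intro k' hk'
    rw [Fintype.mem_piFinset] at hk'
    rw [Finset.mem_sigma]
    constructor
    · rw [Fintype.mem_piFinset]
      intro i
      rw [Finset.mem_range]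
      exact hψ_ltM i (k' i) (Finset.mem_range.1 (hk' i))
    · rw [Fintype.mem_piFinset]
      intro i
      rw [Finset.mem_Ico]
      exact ⟨hψ_spec i (k' i), hψ_lt i (k' i) (Finset.mem_range.1 (hk' i))⟩
  · intro x hx
    rw [Finset.mem_sigma] at hx
    obtain ⟨h1, h2⟩ := hx
    rw [Fintype.mem_piFinset] at h1 h2
    have : (fun i => ψ i (x.2 i)) = x.1 := by
      funext i
      have hki := Finset.mem_range.1 (h1 i)
      have := Finset.mem_Ico.1 (h2 i)
      exact hψ_eq i (x.2 i) (x.1 i) hki this.1 this.2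
    exact Sigma.ext this (by simp)
  · intro k' _
    rfl
  · intro x _
    rfl

end LeonovAux

namespace LeonovAux

variable {d : ℕ}

lemma sum_quasiVol_cells (f : (Fin d → ℝ) → ℝ) :
    ∀ (S : Finset (Fin d)) (p : Fin d → ℝ) (m : Fin d → ℕ) (t : Fin d → ℕ → ℝ)
      (lo hi : Fin d → ℝ), (∀ i ∈ S, t i 0 = lo i) → (∀ i ∈ S, t i (m i) = hi i) →
      ∑ k ∈ Fintype.piFinset (fun i => Finset.range (if i ∈ S then m i else 1)),
          quasiVol f S p (fun i => t i (k i)) (fun i => t i (k i + 1))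
        = quasiVol f S p lo hi := by
  intro S
  induction S using Finset.induction with
  | empty =>
    intro p m t lo hi h0 hm
    have hconst : ∀ k : Fin d → ℕ,
        quasiVol f ∅ p (fun i => t i (k i)) (fun i => t i (k i + 1)) = f p :=
      fun k => quasiVol_empty f p _ _
    rw [Finset.sum_congr rfl (fun k _ => hconst k), Finset.sum_const,
      Fintype.card_piFinset]
    simp [quasiVol_empty]
  | @insert i S₀ hiS ih =>
    intro p m t lo hi h0 hm
    rw [sum_piFinset_split (fun l => Finset.range (if l ∈ insert i S₀ then m l else 1)) i]
    have hif : (if i ∈ insert i S₀ then m i else 1) = m i := by simp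
    rw [hif]
    have hinner : ∀ j ∈ Finset.range (m i),
        ∀ k ∈ Fintype.piFinset (Function.update
            (fun l => Finset.range (if l ∈ insert i S₀ then m l else 1)) i {0}),
        quasiVol f (insert i S₀) p (fun l => t l (Function.update k i j l))
            (fun l => t l (Function.update k i j l + 1))
          = quasiVol f S₀ (Function.update p i (t i (j + 1)))
              (fun l => t l (k l)) (fun l => t l (k l + 1))
            - quasiVol f S₀ (Function.update p i (t i j))
              (fun l => t l (k l)) (fun l => t l (k l + 1)) := by
      intro j _ k hk
      rw [quasiVol_insert f hiS]
      have e1 : Function.update k i j i = j := by simp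
      congr 1
      · rw [e1]
        refine quasiVol_congr f S₀ _ _ _ _ _ ?_ ?_ <;>
        · intro l hl
          have hne : l ≠ i := fun h => hiS (h ▸ hl)
          rw [Function.update_of_ne hne]
      · rw [e1]
        refine quasiVol_congr f S₀ _ _ _ _ _ ?_ ?_ <;>
        · intro l hl
          have hne : l ≠ i := fun h => hiS (h ▸ hl)
          rw [Function.update_of_ne hne]
    rw [Finset.sum_congr rfl (fun j hj => Finset.sum_congr rfl (hinner j hj))]
    rw [Finset.sum_comm]
    have htel : ∀ k : Fin d → ℕ, ∑ j ∈ Finset.range (m i),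
        (quasiVol f S₀ (Function.update p i (t i (j + 1)))
              (fun l => t l (k l)) (fun l => t l (k l + 1))
          - quasiVol f S₀ (Function.update p i (t i j))
              (fun l => t l (k l)) (fun l => t l (k l + 1)))
        = quasiVol f S₀ (Function.update p i (hi i))
              (fun l => t l (k l)) (fun l => t l (k l + 1))
          - quasiVol f S₀ (Function.update p i (lo i))
              (fun l => t l (k l)) (fun l => t l (k l + 1)) := by
      intro k
      rw [Finset.sum_range_sub (fun j => quasiVol f S₀ (Function.update p i (t i j))
        (fun l => t l (k l)) (fun l => t l (k l + 1))) (m i)]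
      rw [h0 i (Finset.mem_insert_self i S₀), hm i (Finset.mem_insert_self i S₀)]
    rw [Finset.sum_congr rfl (fun k _ => htel k), Finset.sum_sub_distrib]
    have hset : Function.update
        (fun l => Finset.range (if l ∈ insert i S₀ then m l else 1)) i {0}
        = fun l => Finset.range (if l ∈ S₀ then m l else 1) := by
      funext l
      by_cases hl : l = i
      · subst hl
        simp [hiS, Finset.range_one]
      · rw [Function.update_of_ne hl]
        simp [hl]
    rw [hset]
    rw [ih (Function.update p i (hi i)) m t lo hi
      (fun l hl => h0 l (Finset.mem_insert_of_mem hl))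
      (fun l hl => hm l (Finset.mem_insert_of_mem hl)),
      ih (Function.update p i (lo i)) m t lo hi
      (fun l hl => h0 l (Finset.mem_insert_of_mem hl))
      (fun l hl => hm l (Finset.mem_insert_of_mem hl))]
    rw [← quasiVol_insert f hiS]

lemma abs_quasiVol_le_gridSum (f : (Fin d → ℝ) → ℝ) (S : Finset (Fin d))
    (p lo hi : Fin d → ℝ) (G : Grid d S lo hi) :
    |quasiVol f S p lo hi| ≤ gridSum f S p lo hi G := by
  rw [← sum_quasiVol_cells f S p G.m G.t lo hi G.first G.last]
  exact Finset.abs_sum_le_sum_abs _ _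

end LeonovAux

namespace LeonovAux

variable {d : ℕ}

def trivGrid (S : Finset (Fin d)) (lo hi : Fin d → ℝ) (h : ∀ i ∈ S, lo i ≤ hi i) :
    Grid d S lo hi where
  m := fun _ => 1
  t := fun i j => if j = 0 then lo i else hi i
  mono := by
    intro i hi j k hjk hk
    by_cases hj0 : j = 0 <;> by_cases hk0 : k = 0 <;> simp [hj0, hk0, h i hi] <;> omega
  first := by intro i _; simp
  last := by intro i _; simp

lemma gridSum_nonneg (f : (Fin d → ℝ) → ℝ) (S : Finset (Fin d)) (p lo hi : Fin d → ℝ)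
    (G : Grid d S lo hi) : 0 ≤ gridSum f S p lo hi G :=
  Finset.sum_nonneg fun _ _ => abs_nonneg _

lemma range_nonempty (f : (Fin d → ℝ) → ℝ) (S : Finset (Fin d)) (p lo hi : Fin d → ℝ)
    (h : ∀ i ∈ S, lo i ≤ hi i) : (Set.range (gridSum f S p lo hi)).Nonempty :=
  ⟨_, Set.mem_range_self (trivGrid S lo hi h)⟩

lemma gridSum_degenerate (f : (Fin d → ℝ) → ℝ) (S : Finset (Fin d)) (p lo hi : Fin d → ℝ)
    {i₀ : Fin d} (hi₀ : i₀ ∈ S) (hd : lo i₀ = hi i₀) (G : Grid d S lo hi) :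
    gridSum f S p lo hi G = 0 := by
  unfold gridSum
  refine Finset.sum_eq_zero fun k hk => ?_
  rw [Fintype.mem_piFinset] at hk
  have hki := hk i₀
  rw [Finset.mem_range, if_pos hi₀] at hki
  have hconst : ∀ j ≤ G.m i₀, G.t i₀ j = lo i₀ := by
    intro j hj
    have h1 : G.t i₀ 0 ≤ G.t i₀ j := G.mono i₀ hi₀ 0 j (Nat.zero_le _) hj
    have h2 : G.t i₀ j ≤ G.t i₀ (G.m i₀) := G.mono i₀ hi₀ j (G.m i₀) hj (le_refl _)
    rw [G.first i₀ hi₀] at h1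
    rw [G.last i₀ hi₀, ← hd] at h2
    linarith
  have : G.t i₀ (k i₀) = G.t i₀ (k i₀ + 1) := by
    rw [hconst (k i₀) (le_of_lt hki), hconst (k i₀ + 1) hki]
  rw [quasiVol_degenerate f S p _ _ hi₀ this, abs_zero]

lemma vitaliVar_degenerate (f : (Fin d → ℝ) → ℝ) (S : Finset (Fin d)) (p lo hi : Fin d → ℝ)
    (hle : ∀ i ∈ S, lo i ≤ hi i) {i₀ : Fin d} (hi₀ : i₀ ∈ S) (hd : lo i₀ = hi i₀) :
    vitaliVar f S p lo hi = 0 := by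
  unfold vitaliVar
  have : Set.range (gridSum f S p lo hi) = {0} := by
    apply Set.eq_singleton_iff_nonempty_unique_mem.2
    exact ⟨range_nonempty f S p lo hi hle, fun x ⟨G, hG⟩ =>
      hG ▸ gridSum_degenerate f S p lo hi hi₀ hd G⟩
  rw [this, csSup_singleton]

lemma range_gridSum_congr (f : (Fin d → ℝ) → ℝ) (S : Finset (Fin d))
    (p lo hi lo' hi' : Fin d → ℝ)
    (hlo : ∀ i ∈ S, lo i = lo' i) (hhi : ∀ i ∈ S, hi i = hi' i) :
    Set.range (gridSum f S p lo hi) = Set.range (gridSum f S p lo' hi') := by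
  ext x
  constructor
  · rintro ⟨G, rfl⟩
    exact ⟨⟨G.m, G.t, G.mono, fun i hi => (G.first i hi).trans (hlo i hi),
      fun i hi => (G.last i hi).trans (hhi i hi)⟩, rfl⟩
  · rintro ⟨G, rfl⟩
    exact ⟨⟨G.m, G.t, G.mono, fun i hi => (G.first i hi).trans (hlo i hi).symm,
      fun i hi => (G.last i hi).trans (hhi i hi).symm⟩, rfl⟩

lemma vitaliVar_congr (f : (Fin d → ℝ) → ℝ) (S : Finset (Fin d))
    (p lo hi lo' hi' : Fin d → ℝ)
    (hlo : ∀ i ∈ S, lo i = lo' i) (hhi : ∀ i ∈ S, hi i = hi' i) :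
    vitaliVar f S p lo hi = vitaliVar f S p lo' hi' := by
  unfold vitaliVar
  rw [range_gridSum_congr f S p lo hi lo' hi' hlo hhi]

end LeonovAux

namespace LeonovAux

variable {d : ℕ}

def extGrid (S : Finset (Fin d)) (lo hi : Fin d → ℝ) (hlo : ∀ i ∈ S, 0 ≤ lo i)
    (hhi : ∀ i ∈ S, hi i ≤ 1) (G : Grid d S lo hi) : Grid d S 0 1 where
  m := fun i => G.m i + 2
  t := fun i j => if j = 0 then 0 else if j ≤ G.m i + 1 then G.t i (j - 1) else 1
  mono := by
    intro i hi j k hjk hk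
    have hb : ∀ l ≤ G.m i, 0 ≤ G.t i l ∧ G.t i l ≤ 1 := by
      intro l hl
      constructor
      · have := G.mono i hi 0 l (Nat.zero_le _) hl
        rw [G.first i hi] at this
        linarith [hlo i hi]
      · have := G.mono i hi l (G.m i) hl (le_refl _)
        rw [G.last i hi] at this
        linarith [hhi i hi]
    by_cases hj0 : j = 0
    · subst hj0
      rw [if_pos rfl]
      by_cases hk0 : k = 0
      · simp [hk0]
      · rw [if_neg hk0]
        by_cases hk1 : k ≤ G.m i + 1
        · rw [if_pos hk1]
          exact (hb (k - 1) (by omega)).1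
        · rw [if_neg hk1]; norm_num
    · rw [if_neg hj0, if_neg (by omega : ¬ k = 0)]
      by_cases hk1 : k ≤ G.m i + 1
      · rw [if_pos (by omega : j ≤ G.m i + 1), if_pos hk1]
        exact G.mono i hi (j - 1) (k - 1) (by omega) (by omega)
      · rw [if_neg hk1]
        by_cases hj1 : j ≤ G.m i + 1
        · rw [if_pos hj1]
          exact (hb (j - 1) (by omega)).2
        · rw [if_neg hj1]
  first := by intro i _; simp
  last := by
    intro i _
    rw [if_neg (by omega), if_neg (by omega)]
    simp

lemma gridSum_le_ext (f : (Fin d → ℝ) → ℝ) (S : Finset (Fin d)) (p lo hi : Fin d → ℝ)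
    (hlo : ∀ i ∈ S, 0 ≤ lo i) (hhi : ∀ i ∈ S, hi i ≤ 1) (G : Grid d S lo hi) :
    gridSum f S p lo hi G ≤ gridSum f S p 0 1 (extGrid S lo hi hlo hhi G) := by
  set G2 := extGrid S lo hi hlo hhi G with hG2
  have hsub : Fintype.piFinset
        (fun i => Finset.Ico (if i ∈ S then 1 else 0)
          ((if i ∈ S then 1 else 0) + (if i ∈ S then G.m i else 1)))
      ⊆ Fintype.piFinset (fun i => Finset.range (if i ∈ S then G2.m i else 1)) := by
    apply Fintype.piFinset_subset
    intro i k hk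
    rw [Finset.mem_Ico] at hk
    rw [Finset.mem_range]
    by_cases hi : i ∈ S <;> simp only [hi, if_true, if_false] at hk ⊢
    · show k < G.m i + 2
      omega
    · omega
  calc gridSum f S p lo hi G
      = ∑ k ∈ Fintype.piFinset (fun i => Finset.range (if i ∈ S then G.m i else 1)),
          |quasiVol f S p (fun i => G.t i (k i)) (fun i => G.t i (k i + 1))| := rfl
    _ = ∑ k ∈ Fintype.piFinset
          (fun i => Finset.Ico (if i ∈ S then 1 else 0)
            ((if i ∈ S then 1 else 0) + (if i ∈ S then G.m i else 1))),
          |quasiVol f S p (fun i => G2.t i (k i)) (fun i => G2.t i (k i + 1))| := by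
        rw [sum_piFinset_shift (fun i => if i ∈ S then 1 else 0)
          (fun i => if i ∈ S then G.m i else 1)]
        refine Finset.sum_congr rfl fun k hk => ?_
        rw [Fintype.mem_piFinset] at hk
        congr 1
        refine quasiVol_congr f S p _ _ _ _ ?_ ?_
        · intro i hi
          have hki := Finset.mem_range.1 (hk i)
          rw [if_pos hi] at hki
          show G.t i (k i) = G2.t i (k i + (if i ∈ S then 1 else 0))
          rw [if_pos hi]
          show G.t i (k i) = if k i + 1 = 0 then 0 else
            if k i + 1 ≤ G.m i + 1 then G.t i (k i + 1 - 1) else 1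
          rw [if_neg (by omega), if_pos (by omega)]
          simp
        · intro i hi
          have hki := Finset.mem_range.1 (hk i)
          rw [if_pos hi] at hki
          show G.t i (k i + 1) = G2.t i (k i + (if i ∈ S then 1 else 0) + 1)
          rw [if_pos hi]
          show G.t i (k i + 1) = if k i + 1 + 1 = 0 then 0 else
            if k i + 1 + 1 ≤ G.m i + 1 then G.t i (k i + 1 + 1 - 1) else 1
          rw [if_neg (by omega), if_pos (by omega)]
          simp
    _ ≤ ∑ k ∈ Fintype.piFinset (fun i => Finset.range (if i ∈ S then G2.m i else 1)),
          |quasiVol f S p (fun i => G2.t i (k i)) (fun i => G2.t i (k i + 1))| :=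
        Finset.sum_le_sum_of_subset_of_nonneg hsub (fun _ _ _ => abs_nonneg _)
    _ = gridSum f S p 0 1 G2 := rfl

lemma bddVitali_sub (f : (Fin d → ℝ) → ℝ) (S : Finset (Fin d)) (p lo hi : Fin d → ℝ)
    (hb : BddVitali f S p 0 1) (hlo : ∀ i ∈ S, 0 ≤ lo i) (hhi : ∀ i ∈ S, hi i ≤ 1) :
    BddVitali f S p lo hi := by
  refine ⟨vitaliVar f S p 0 1, ?_⟩
  rintro x ⟨G, rfl⟩
  calc gridSum f S p lo hi G ≤ gridSum f S p 0 1 (extGrid S lo hi hlo hhi G) :=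
        gridSum_le_ext f S p lo hi hlo hhi G
    _ ≤ vitaliVar f S p 0 1 := le_csSup hb (Set.mem_range_self _)

lemma gridSum_le_vitaliVar (f : (Fin d → ℝ) → ℝ) (S : Finset (Fin d)) (p lo hi : Fin d → ℝ)
    (hb : BddVitali f S p lo hi) (G : Grid d S lo hi) :
    gridSum f S p lo hi G ≤ vitaliVar f S p lo hi :=
  le_csSup hb (Set.mem_range_self _)

end LeonovAux

namespace LeonovAux

variable {d : ℕ}

lemma gridSum_le_refine (f : (Fin d → ℝ) → ℝ) (S : Finset (Fin d)) (p lo hi : Fin d → ℝ)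
    (G G' : Grid d S lo hi) (φ : Fin d → ℕ → ℕ)
    (h0 : ∀ i ∈ S, φ i 0 = 0) (hm : ∀ i ∈ S, φ i (G.m i) = G'.m i)
    (hmono : ∀ i ∈ S, ∀ j k, j ≤ k → k ≤ G.m i → φ i j ≤ φ i k)
    (ht : ∀ i ∈ S, ∀ j ≤ G.m i, G.t i j = G'.t i (φ i j)) :
    gridSum f S p lo hi G ≤ gridSum f S p lo hi G' := by
  classical
  have key : gridSum f S p lo hi G'
      = ∑ k ∈ Fintype.piFinset (fun i => Finset.range (if i ∈ S then G.m i else 1)),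
          ∑ k' ∈ Fintype.piFinset (fun i => Finset.Ico
              ((if i ∈ S then φ i else id) (k i)) ((if i ∈ S then φ i else id) (k i + 1))),
            |quasiVol f S p (fun i => G'.t i (k' i)) (fun i => G'.t i (k' i + 1))| := by
    refine sum_piFinset_decomp (fun i => if i ∈ S then G.m i else 1)
      (fun i => if i ∈ S then G'.m i else 1) (fun i => if i ∈ S then φ i else id)
      ?_ ?_ ?_ _
    · intro i
      by_cases hi : i ∈ S <;> simp [hi, h0]
    · intro i
      by_cases hi : i ∈ S <;> simp [hi, hm]
    · intro i j k hjk hk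
      by_cases hi : i ∈ S <;> simp only [hi, if_true, if_false, id] at hk ⊢
      · exact hmono i hi j k hjk hk
      · exact hjk
  rw [key]
  unfold gridSum
  refine Finset.sum_le_sum fun k hk => ?_
  rw [Fintype.mem_piFinset] at hk
  have hklt : ∀ i ∈ S, k i < G.m i := by
    intro i hi
    have := Finset.mem_range.1 (hk i)
    rwa [if_pos hi] at this
  set c : Fin d → ℕ := fun i => (if i ∈ S then φ i else id) (k i) with hc
  set n : Fin d → ℕ := fun i =>
    (if i ∈ S then φ i else id) (k i + 1) - (if i ∈ S then φ i else id) (k i) with hn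
  have hcn : ∀ i, (if i ∈ S then φ i else id) (k i + 1) = c i + n i := by
    intro i
    rw [hc, hn]
    by_cases hi : i ∈ S <;> simp only [hi, if_true, if_false, id]
    · have : φ i (k i) ≤ φ i (k i + 1) :=
        hmono i hi (k i) (k i + 1) (Nat.le_succ _) (hklt i hi)
      omega
    · omega
  have hfam : (fun i => Finset.Ico ((if i ∈ S then φ i else id) (k i))
        ((if i ∈ S then φ i else id) (k i + 1)))
      = fun i => Finset.Ico (c i) (c i + n i) := by
    funext i
    rw [hcn i, hc]
  rw [hfam, sum_piFinset_shift c n]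
  have hcells : ∑ k'' ∈ Fintype.piFinset (fun i => Finset.range (n i)),
      quasiVol f S p (fun i => G'.t i (k'' i + c i)) (fun i => G'.t i (k'' i + c i + 1))
      = quasiVol f S p (fun i => G.t i (k i)) (fun i => G.t i (k i + 1)) := by
    have hfam2 : (fun i => Finset.range (if i ∈ S then n i else 1))
        = fun i => Finset.range (n i) := by
      funext i
      by_cases hi : i ∈ S
      · rw [if_pos hi]
      · rw [if_neg hi, hn]
        simp [hi]
    have := sum_quasiVol_cells f S p n (fun i j => G'.t i (j + c i))
      (fun i => G.t i (k i)) (fun i => G.t i (k i + 1)) ?_ ?_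
    · rw [hfam2] at this
      rw [← this]
      refine Finset.sum_congr rfl fun k'' _ => ?_
      refine quasiVol_congr f S p _ _ _ _ (fun i _ => rfl) (fun i _ => ?_)
      show G'.t i (k'' i + c i + 1) = G'.t i (k'' i + 1 + c i)
      congr 1
      omega
    · intro i hi
      show G'.t i (0 + c i) = G.t i (k i)
      rw [Nat.zero_add, hc]
      simp only [hi, if_true]
      exact (ht i hi (k i) (le_of_lt (hklt i hi))).symm
    · intro i hi
      show G'.t i (n i + c i) = G.t i (k i + 1)
      have : n i + c i = (if i ∈ S then φ i else id) (k i + 1) := by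
        rw [hcn i]; omega
      rw [this]
      simp only [hi, if_true]
      exact (ht i hi (k i + 1) (hklt i hi)).symm
  calc |quasiVol f S p (fun i => G.t i (k i)) (fun i => G.t i (k i + 1))|
      = |∑ k'' ∈ Fintype.piFinset (fun i => Finset.range (n i)),
          quasiVol f S p (fun i => G'.t i (k'' i + c i))
            (fun i => G'.t i (k'' i + c i + 1))| := by rw [hcells]
    _ ≤ ∑ k'' ∈ Fintype.piFinset (fun i => Finset.range (n i)),
          |quasiVol f S p (fun i => G'.t i (k'' i + c i))
            (fun i => G'.t i (k'' i + c i + 1))| := Finset.abs_sum_le_sum_abs _ _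
    _ = _ := by
      refine Finset.sum_congr rfl fun k'' _ => ?_
      rfl

end LeonovAux

namespace LeonovAux

variable {d : ℕ}

noncomputable def pt (F : Finset ℝ) (j : ℕ) : ℝ :=
  if h : j < F.card then (F.orderIsoOfFin rfl ⟨j, h⟩ : ℝ) else 0

noncomputable def rk (F : Finset ℝ) (x : ℝ) : ℕ :=
  if h : x ∈ F then ((F.orderIsoOfFin rfl).symm ⟨x, h⟩ : Fin F.card) else 0

lemma pt_mem (F : Finset ℝ) {j : ℕ} (h : j < F.card) : pt F j ∈ F := by
  rw [pt, dif_pos h]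
  exact (F.orderIsoOfFin rfl ⟨j, h⟩).2

lemma pt_mono (F : Finset ℝ) {j k : ℕ} (hjk : j ≤ k) (h : k < F.card) :
    pt F j ≤ pt F k := by
  have hj : j < F.card := lt_of_le_of_lt hjk h
  rw [pt, pt, dif_pos hj, dif_pos h]
  have : (⟨j, hj⟩ : Fin F.card) ≤ ⟨k, h⟩ := hjk
  exact_mod_cast (F.orderIsoOfFin rfl).monotone this

lemma rk_lt (F : Finset ℝ) {x : ℝ} (h : x ∈ F) : rk F x < F.card := by
  rw [rk, dif_pos h]
  exact ((F.orderIsoOfFin rfl).symm ⟨x, h⟩).2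

lemma rk_val (F : Finset ℝ) {x : ℝ} (h : x ∈ F) :
    rk F x = ((F.orderIsoOfFin rfl).symm ⟨x, h⟩ : Fin F.card) := by
  unfold rk
  rw [dif_pos h]

lemma pt_rk (F : Finset ℝ) {x : ℝ} (h : x ∈ F) : pt F (rk F x) = x := by
  have hlt := rk_lt F h
  unfold pt
  rw [dif_pos hlt]
  have he : (⟨rk F x, hlt⟩ : Fin F.card) = (F.orderIsoOfFin rfl).symm ⟨x, h⟩ :=
    Fin.ext (rk_val F h)
  rw [he, OrderIso.apply_symm_apply]

lemma rk_pt (F : Finset ℝ) {j : ℕ} (h : j < F.card) : rk F (pt F j) = j := by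
  rw [rk_val F (pt_mem F h)]
  have : (⟨pt F j, pt_mem F h⟩ : {x // x ∈ F}) = F.orderIsoOfFin rfl ⟨j, h⟩ := by
    apply Subtype.ext
    show pt F j = _
    unfold pt
    rw [dif_pos h]
  rw [this, OrderIso.symm_apply_apply]

lemma rk_mono (F : Finset ℝ) {x y : ℝ} (hx : x ∈ F) (hy : y ∈ F) (hxy : x ≤ y) :
    rk F x ≤ rk F y := by
  rw [rk, rk, dif_pos hx, dif_pos hy]
  have : (⟨x, hx⟩ : {z // z ∈ F}) ≤ ⟨y, hy⟩ := hxy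
  exact_mod_cast (F.orderIsoOfFin rfl).symm.monotone this

lemma rk_min (F : Finset ℝ) {x : ℝ} (hx : x ∈ F) (hmin : ∀ y ∈ F, x ≤ y) :
    rk F x = 0 := by
  have hcard : 0 < F.card := Finset.card_pos.2 ⟨x, hx⟩
  have h1 : rk F x ≤ rk F (pt F 0) :=
    rk_mono F hx (pt_mem F hcard) (hmin _ (pt_mem F hcard))
  rw [rk_pt F hcard] at h1
  omega

lemma rk_max (F : Finset ℝ) {x : ℝ} (hx : x ∈ F) (hmax : ∀ y ∈ F, y ≤ x) :
    rk F x = F.card - 1 := by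
  have hcard : 0 < F.card := Finset.card_pos.2 ⟨x, hx⟩
  have hlt : F.card - 1 < F.card := by omega
  have h1 : rk F (pt F (F.card - 1)) ≤ rk F x :=
    rk_mono F (pt_mem F hlt) hx (hmax _ (pt_mem F hlt))
  rw [rk_pt F hlt] at h1
  have := rk_lt F hx
  omega

end LeonovAux

namespace LeonovAux

variable {d : ℕ}

lemma master (f : (Fin d → ℝ) → ℝ) (S : Finset (Fin d))
    (hbS : BddVitali f S (0 : Fin d → ℝ) 0 1)
    (a b : Fin d → ℝ) (hab : ∀ i ∈ S, 0 ≤ a i ∧ a i ≤ b i ∧ b i ≤ 1) :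
    |quasiVol f S 0 a b| ≤
      ∑ W ∈ S.powerset, (-1 : ℝ) ^ W.card
        * vitaliVar f S 0 0 (fun i => if i ∈ S then (if i ∈ W then a i else b i) else 0) := by
  classical
  set xw : Finset (Fin d) → Fin d → ℝ :=
    fun W i => if i ∈ S then (if i ∈ W then a i else b i) else 0 with hxw
  have hxwS : ∀ W, ∀ i ∈ S, xw W i = if i ∈ W then a i else b i := by
    intro W i hi; rw [hxw]; simp [hi]
  have hxw0 : ∀ W, ∀ i ∈ S, (0 : ℝ) ≤ xw W i := by
    intro W i hi
    rw [hxwS W i hi]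
    rcases hab i hi with ⟨h1, h2, h3⟩
    by_cases hiW : i ∈ W <;> simp [hiW] <;> linarith
  have hxw1 : ∀ W, ∀ i ∈ S, xw W i ≤ 1 := by
    intro W i hi
    rw [hxwS W i hi]
    rcases hab i hi with ⟨h1, h2, h3⟩
    by_cases hiW : i ∈ W <;> simp [hiW] <;> linarith
  have hlo0 : ∀ i ∈ S, (0 : Fin d → ℝ) i ≤ (0 : Fin d → ℝ) i := fun i _ => le_refl _
  have hbW : ∀ W, BddVitali f S 0 0 (xw W) := by
    intro W
    exact bddVitali_sub f S 0 0 (xw W) hbS (fun i _ => le_refl _) (hxw1 W)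
  have hle0xw : ∀ W, ∀ i ∈ S, (0 : Fin d → ℝ) i ≤ xw W i := fun W i hi => hxw0 W i hi
  have hne : ∀ W, (Set.range (gridSum f S 0 0 (xw W))).Nonempty :=
    fun W => range_nonempty f S 0 0 (xw W) (hle0xw W)
  refine le_of_forall_pos_le_add fun ε hε => ?_
  set ε' : ℝ := ε / (S.powerset.card + 1) with hε'
  have hε'pos : 0 < ε' := by
    rw [hε']
    positivity
  -- choose near-optimal grids
  have hGex : ∀ W : Finset (Fin d), ∃ G : Grid d S (0 : Fin d → ℝ) (xw W),
      vitaliVar f S 0 0 (xw W) - ε' < gridSum f S 0 0 (xw W) G := by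
    intro W
    have hlt : vitaliVar f S 0 0 (xw W) - ε' < sSup (Set.range (gridSum f S 0 0 (xw W))) := by
      have : sSup (Set.range (gridSum f S 0 0 (xw W))) = vitaliVar f S 0 0 (xw W) := rfl
      rw [this]
      linarith
    obtain ⟨x, ⟨G, rfl⟩, hx⟩ := exists_lt_of_lt_csSup (hne W) hlt
    exact ⟨G, hx⟩
  choose G hG using hGex
  -- the master partition
  set Q : Fin d → Finset ℝ := fun i =>
    S.powerset.biUnion (fun W => (Finset.range ((G W).m i + 1)).image ((G W).t i)) with hQ
  have hQmem : ∀ W ∈ S.powerset, ∀ i : Fin d, ∀ j ≤ (G W).m i, (G W).t i j ∈ Q i := by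
    intro W hW i j hj
    rw [hQ]
    exact Finset.mem_biUnion.2 ⟨W, hW, Finset.mem_image.2 ⟨j, Finset.mem_range.2 (by omega), rfl⟩⟩
  have hQ0 : ∀ i ∈ S, (0 : ℝ) ∈ Q i := by
    intro i hi
    have h := (G ∅).first i hi
    have : (0 : Fin d → ℝ) i = 0 := rfl
    rw [this] at h
    rw [← h]
    exact hQmem ∅ (Finset.empty_mem_powerset S) i 0 (Nat.zero_le _)
  have hQa : ∀ i ∈ S, a i ∈ Q i := by
    intro i hi
    have h := (G S).last i hi
    rw [hxwS S i hi, if_pos hi] at h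
    rw [← h]
    exact hQmem S (Finset.mem_powerset_self S) i _ (le_refl _)
  have hQb : ∀ i ∈ S, b i ∈ Q i := by
    intro i hi
    have h := (G ∅).last i hi
    rw [hxwS ∅ i hi, if_neg (Finset.notMem_empty i)] at h
    rw [← h]
    exact hQmem ∅ (Finset.empty_mem_powerset S) i _ (le_refl _)
  have hQlb : ∀ i ∈ S, ∀ y ∈ Q i, 0 ≤ y := by
    intro i hi y hy
    rw [hQ] at hy
    obtain ⟨W, hW, hy⟩ := Finset.mem_biUnion.1 hy
    obtain ⟨j, hj, rfl⟩ := Finset.mem_image.1 hy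
    have hj' : j ≤ (G W).m i := by
      have := Finset.mem_range.1 hj; omega
    have h1 := (G W).mono i hi 0 j (Nat.zero_le _) hj'
    have h0 := (G W).first i hi
    have : (0 : Fin d → ℝ) i = 0 := rfl
    rw [this] at h0
    linarith
  have hQub : ∀ i ∈ S, ∀ y ∈ Q i, y ≤ b i := by
    intro i hi y hy
    rw [hQ] at hy
    obtain ⟨W, hW, hy⟩ := Finset.mem_biUnion.1 hy
    obtain ⟨j, hj, rfl⟩ := Finset.mem_image.1 hy
    have hj' : j ≤ (G W).m i := by
      have := Finset.mem_range.1 hj; omega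
    have h1 := (G W).mono i hi j ((G W).m i) hj' (le_refl _)
    have h2 := (G W).last i hi
    rw [hxwS W i hi] at h2
    rcases hab i hi with ⟨_, hab2, _⟩
    by_cases hiW : i ∈ W
    · rw [if_pos hiW] at h2; linarith
    · rw [if_neg hiW] at h2; linarith
  set r : Fin d → ℕ := fun i => rk (Q i) (a i) with hr
  set M : Fin d → ℕ := fun i => (Q i).card - 1 with hM
  set T : Fin d → ℕ → ℝ := fun i => pt (Q i) with hT
  have hrM : ∀ i ∈ S, r i ≤ M i := by
    intro i hi
    have h1 := rk_lt (Q i) (hQa i hi)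
    have h2 : r i = rk (Q i) (a i) := rfl
    have h3 : M i = (Q i).card - 1 := rfl
    omega
  have hcard : ∀ i ∈ S, 0 < (Q i).card := fun i hi => Finset.card_pos.2 ⟨0, hQ0 i hi⟩
  have hT0 : ∀ i ∈ S, T i 0 = 0 := by
    intro i hi
    have h := rk_min (Q i) (hQ0 i hi) (hQlb i hi)
    rw [hT, ← h]
    exact pt_rk (Q i) (hQ0 i hi)
  have hTr : ∀ i ∈ S, T i (r i) = a i := fun i hi => pt_rk (Q i) (hQa i hi)
  have hrkb : ∀ i ∈ S, rk (Q i) (b i) = M i := by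
    intro i hi
    rw [hM]
    exact rk_max (Q i) (hQb i hi) (hQub i hi)
  have hTM : ∀ i ∈ S, T i (M i) = b i := by
    intro i hi
    rw [hT, ← hrkb i hi]
    exact pt_rk (Q i) (hQb i hi)
  have hTmono : ∀ i ∈ S, ∀ j k, j ≤ k → k ≤ M i → T i j ≤ T i k := by
    intro i hi j k hjk hk
    have hc := hcard i hi
    have h3 : M i = (Q i).card - 1 := rfl
    refine pt_mono (Q i) hjk ?_
    omega
  -- refined prefix grids
  have hHex : ∀ W : Finset (Fin d), ∃ H : Grid d S (0 : Fin d → ℝ) (xw W),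
      H.m = (fun i => if i ∈ W then r i else M i) ∧ H.t = T := by
    intro W
    refine ⟨⟨fun i => if i ∈ W then r i else M i, T, ?_, ?_, ?_⟩, rfl, rfl⟩
    · intro i hi j k hjk hk
      refine hTmono i hi j k hjk (le_trans hk ?_)
      by_cases hiW : i ∈ W
      · rw [if_pos hiW]; exact hrM i hi
      · rw [if_neg hiW]
    · intro i hi
      show T i 0 = (0 : Fin d → ℝ) i
      rw [hT0 i hi]; rfl
    · intro i hi
      rw [hxwS W i hi]
      by_cases hiW : i ∈ W
      · rw [if_pos hiW, if_pos hiW]; exact hTr i hi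
      · rw [if_neg hiW, if_neg hiW]; exact hTM i hi
  choose H hHm hHt using hHex
  -- the suffix grid on [a,b]
  have hSGex : ∃ SG : Grid d S a b,
      SG.m = (fun i => M i - r i) ∧ SG.t = (fun i j => T i (j + r i)) := by
    refine ⟨⟨fun i => M i - r i, fun i j => T i (j + r i), ?_, ?_, ?_⟩, rfl, rfl⟩
    · intro i hi j k hjk hk
      refine hTmono i hi (j + r i) (k + r i) (by omega) ?_
      have := hrM i hi
      omega
    · intro i hi
      show T i (0 + r i) = a i
      rw [Nat.zero_add]
      exact hTr i hi
    · intro i hi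
      show T i (M i - r i + r i) = b i
      rw [Nat.sub_add_cancel (hrM i hi)]
      exact hTM i hi
  obtain ⟨SG, hSGm, hSGt⟩ := hSGex
  -- Step 1: each chosen grid refines into the prefix grid
  have step1 : ∀ W ∈ S.powerset,
      gridSum f S 0 0 (xw W) (G W) ≤ gridSum f S 0 0 (xw W) (H W) := by
    intro W hW
    refine gridSum_le_refine f S 0 0 (xw W) (G W) (H W)
      (fun i j => rk (Q i) ((G W).t i j)) ?_ ?_ ?_ ?_
    · intro i hi
      have h := (G W).first i hi
      have h2 : (0 : Fin d → ℝ) i = 0 := rfl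
      rw [h2] at h
      rw [h]
      exact rk_min (Q i) (hQ0 i hi) (hQlb i hi)
    · intro i hi
      simp only [hHm W]
      have h := (G W).last i hi
      rw [hxwS W i hi] at h
      by_cases hiW : i ∈ W
      · rw [if_pos hiW] at h
        rw [h, if_pos hiW]
      · rw [if_neg hiW] at h
        rw [h, if_neg hiW]
        exact hrkb i hi
    · intro i hi j k hjk hk
      exact rk_mono (Q i) (hQmem W hW i j (le_trans hjk hk)) (hQmem W hW i k hk)
        ((G W).mono i hi j k hjk hk)
    · intro i hi j hj
      rw [hHt W]
      exact (pt_rk (Q i) (hQmem W hW i j hj)).symm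
  -- Step 2/3: compare with the Vitali variation
  have step2 : ∀ W ∈ S.powerset,
      vitaliVar f S 0 0 (xw W) ≤ gridSum f S 0 0 (xw W) (H W) + ε' := by
    intro W hW
    have h1 := hG W
    have h2 := step1 W hW
    linarith
  have step3 : ∀ W : Finset (Fin d),
      gridSum f S 0 0 (xw W) (H W) ≤ vitaliVar f S 0 0 (xw W) :=
    fun W => le_csSup (hbW W) (Set.mem_range_self _)
  have step4 : ∀ W ∈ S.powerset,
      (-1 : ℝ) ^ W.card * gridSum f S 0 0 (xw W) (H W)
        ≤ (-1 : ℝ) ^ W.card * vitaliVar f S 0 0 (xw W) + ε' := by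
    intro W hW
    rcases Nat.even_or_odd W.card with he | ho
    · rw [he.neg_one_pow]
      have := step3 W
      linarith
    · rw [ho.neg_one_pow]
      have := step2 W hW
      linarith
  -- Step 5: the inclusion-exclusion identity for the prefix grid sums
  have step5 : ∑ W ∈ S.powerset, (-1 : ℝ) ^ W.card * gridSum f S 0 0 (xw W) (H W)
      = gridSum f S 0 a b SG := by
    have hbase : ∀ W ∈ S.powerset,
        gridSum f S 0 0 (xw W) (H W)
          = ∑ k ∈ (Fintype.piFinset
              (fun i => Finset.range (if i ∈ S then M i else 1))).filter
              (fun k => ∀ i ∈ W, k i < r i),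
              |quasiVol f S 0 (fun i => T i (k i)) (fun i => T i (k i + 1))| := by
      intro W hW
      have hWS := Finset.mem_powerset.1 hW
      unfold gridSum
      simp only [hHm W, hHt W]
      congr 1
      ext k
      rw [Fintype.mem_piFinset, Finset.mem_filter, Fintype.mem_piFinset]
      constructor
      · intro hk
        constructor
        · intro i
          have h5 := hk i
          rw [Finset.mem_range] at h5
          rw [Finset.mem_range]
          by_cases hi : i ∈ S
          · rw [if_pos hi] at h5
            rw [if_pos hi]
            by_cases hiW : i ∈ W
            · rw [if_pos hiW] at h5
              have h6 := hrM i hi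
              omega
            · rwa [if_neg hiW] at h5
          · rw [if_neg hi] at h5
            rwa [if_neg hi]
        · intro i hiW
          have := hk i
          have hi : i ∈ S := hWS hiW
          rw [Finset.mem_range, if_pos hi, if_pos hiW] at this
          exact this
      · rintro ⟨hk, hc⟩ i
        have h5 := hk i
        rw [Finset.mem_range] at h5
        rw [Finset.mem_range]
        by_cases hi : i ∈ S
        · rw [if_pos hi] at h5
          rw [if_pos hi]
          by_cases hiW : i ∈ W
          · rw [if_pos hiW]
            exact hc i hiW
          · rwa [if_neg hiW]
        · rw [if_neg hi] at h5
          rwa [if_neg hi]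
    have inner : ∀ k : Fin d → ℕ,
        ∑ W ∈ S.powerset, (if (∀ i ∈ W, k i < r i) then
            (-1 : ℝ) ^ W.card *
              |quasiVol f S 0 (fun i => T i (k i)) (fun i => T i (k i + 1))| else 0)
          = if (∀ i ∈ S, r i ≤ k i) then
              |quasiVol f S 0 (fun i => T i (k i)) (fun i => T i (k i + 1))| else 0 := by
      intro k
      rw [← Finset.sum_filter]
      have hpow : S.powerset.filter (fun W => ∀ i ∈ W, k i < r i)
          = (S.filter (fun i => k i < r i)).powerset := by
        ext W
        rw [Finset.mem_filter, Finset.mem_powerset, Finset.mem_powerset]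
        constructor
        · rintro ⟨hWS, hc⟩ i hiW
          exact Finset.mem_filter.2 ⟨hWS hiW, hc i hiW⟩
        · intro hsub
          exact ⟨fun i hiW => (Finset.mem_filter.1 (hsub hiW)).1,
            fun i hiW => (Finset.mem_filter.1 (hsub hiW)).2⟩
      rw [hpow, ← Finset.sum_mul, sum_powerset_neg_one]
      by_cases hc : S.filter (fun i => k i < r i) = ∅
      · rw [if_pos hc, one_mul, if_pos]
        intro i hi
        have := Finset.filter_eq_empty_iff.1 hc hi
        omega
      · rw [if_neg hc, zero_mul, if_neg]
        intro hall
        apply hc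
        rw [Finset.filter_eq_empty_iff]
        intro i hi
        have := hall i hi
        omega
    calc ∑ W ∈ S.powerset, (-1 : ℝ) ^ W.card * gridSum f S 0 0 (xw W) (H W)
        = ∑ W ∈ S.powerset, ∑ k ∈ Fintype.piFinset
              (fun i => Finset.range (if i ∈ S then M i else 1)),
            (if (∀ i ∈ W, k i < r i) then
              (-1 : ℝ) ^ W.card *
                |quasiVol f S 0 (fun i => T i (k i)) (fun i => T i (k i + 1))| else 0) := by
          refine Finset.sum_congr rfl fun W hW => ?_
          rw [hbase W hW, Finset.mul_sum, ← Finset.sum_filter]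
      _ = ∑ k ∈ Fintype.piFinset (fun i => Finset.range (if i ∈ S then M i else 1)),
            ∑ W ∈ S.powerset, (if (∀ i ∈ W, k i < r i) then
              (-1 : ℝ) ^ W.card *
                |quasiVol f S 0 (fun i => T i (k i)) (fun i => T i (k i + 1))| else 0) :=
          Finset.sum_comm
      _ = ∑ k ∈ Fintype.piFinset (fun i => Finset.range (if i ∈ S then M i else 1)),
            (if (∀ i ∈ S, r i ≤ k i) then
              |quasiVol f S 0 (fun i => T i (k i)) (fun i => T i (k i + 1))| else 0) :=
          Finset.sum_congr rfl fun k _ => inner k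
      _ = ∑ k ∈ (Fintype.piFinset
            (fun i => Finset.range (if i ∈ S then M i else 1))).filter
            (fun k => ∀ i ∈ S, r i ≤ k i),
            |quasiVol f S 0 (fun i => T i (k i)) (fun i => T i (k i + 1))| :=
          (Finset.sum_filter _ _).symm
      _ = ∑ k ∈ Fintype.piFinset (fun i => Finset.Ico (if i ∈ S then r i else 0)
            ((if i ∈ S then r i else 0) + (if i ∈ S then M i - r i else 1))),
            |quasiVol f S 0 (fun i => T i (k i)) (fun i => T i (k i + 1))| := by
          congr 1
          ext k
          rw [Finset.mem_filter, Fintype.mem_piFinset, Fintype.mem_piFinset]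
          constructor
          · rintro ⟨hk, hc⟩ i
            have := hk i
            rw [Finset.mem_range] at this
            rw [Finset.mem_Ico]
            by_cases hi : i ∈ S
            · rw [if_pos hi] at this
              rw [if_pos hi, if_pos hi]
              have h1 := hc i hi
              have h2 := hrM i hi
              omega
            · rw [if_neg hi] at this
              rw [if_neg hi, if_neg hi]
              omega
          · intro hk
            constructor
            · intro i
              have := hk i
              rw [Finset.mem_Ico] at this
              rw [Finset.mem_range]
              by_cases hi : i ∈ S
              · rw [if_pos hi, if_pos hi] at this
                rw [if_pos hi]
                have h2 := hrM i hi
                omega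
              · rw [if_neg hi, if_neg hi] at this
                rw [if_neg hi]
                omega
            · intro i hi
              have := hk i
              rw [Finset.mem_Ico, if_pos hi, if_pos hi] at this
              exact this.1
      _ = ∑ k ∈ Fintype.piFinset
            (fun i => Finset.range (if i ∈ S then M i - r i else 1)),
            |quasiVol f S 0 (fun i => T i (k i + (if i ∈ S then r i else 0)))
              (fun i => T i (k i + (if i ∈ S then r i else 0) + 1))| := by
          rw [sum_piFinset_shift (fun i => if i ∈ S then r i else 0)
            (fun i => if i ∈ S then M i - r i else 1)]
      _ = gridSum f S 0 a b SG := by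
          unfold gridSum
          simp only [hSGm, hSGt]
          refine Finset.sum_congr rfl fun k _ => ?_
          congr 1
          refine quasiVol_congr f S 0 _ _ _ _ ?_ ?_
          · intro i hi
            rw [if_pos hi]
          · intro i hi
            rw [if_pos hi]
            congr 1
            omega
  have step6 : |quasiVol f S 0 a b| ≤ gridSum f S 0 a b SG :=
    abs_quasiVol_le_gridSum f S 0 a b SG
  have hcards : (S.powerset.card : ℝ) * ε' ≤ ε := by
    have hc1 : (0:ℝ) < (S.powerset.card : ℝ) + 1 := by positivity
    have h2 : (S.powerset.card : ℝ) * ε' ≤ ((S.powerset.card : ℝ) + 1) * ε' :=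
      mul_le_mul_of_nonneg_right (by linarith) hε'pos.le
    have h3 : ((S.powerset.card : ℝ) + 1) * ε' = ε := by
      rw [hε']
      field_simp
    linarith
  calc |quasiVol f S 0 a b| ≤ gridSum f S 0 a b SG := step6
    _ = ∑ W ∈ S.powerset, (-1 : ℝ) ^ W.card * gridSum f S 0 0 (xw W) (H W) := step5.symm
    _ ≤ ∑ W ∈ S.powerset, ((-1 : ℝ) ^ W.card * vitaliVar f S 0 0 (xw W) + ε') :=
        Finset.sum_le_sum step4
    _ = (∑ W ∈ S.powerset, (-1 : ℝ) ^ W.card * vitaliVar f S 0 0 (xw W))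
        + S.powerset.card * ε' := by
        rw [Finset.sum_add_distrib, Finset.sum_const, nsmul_eq_mul]
    _ ≤ _ + ε := by
        exact add_le_add (le_refl _) hcards

end LeonovAux

namespace LeonovAux

variable {d : ℕ}

lemma reduction (f : (Fin d → ℝ) → ℝ) (S : Finset (Fin d)) (hS : S.Nonempty)
    (a b : Fin d → ℝ) (hab : ∀ i ∈ S, 0 ≤ a i ∧ a i ≤ b i ∧ b i ≤ 1) :
    quasiVol (fun x => hkVar0On f x) S 0 a b
      = ∑ W ∈ S.powerset, (-1 : ℝ) ^ W.card
          * vitaliVar f S 0 0 (fun i => if i ∈ S then (if i ∈ W then a i else b i) else 0) := by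
  classical
  set xw : Finset (Fin d) → Fin d → ℝ :=
    fun W i => if i ∈ S then (if i ∈ W then a i else b i) else 0 with hxw
  have hxw0 : ∀ W, ∀ i, (0 : ℝ) ≤ xw W i := by
    intro W i
    rw [hxw]
    dsimp only
    by_cases hi : i ∈ S
    · rw [if_pos hi]
      rcases hab i hi with ⟨h1, h2, _⟩
      by_cases hiW : i ∈ W
      · rw [if_pos hiW]; linarith
      · rw [if_neg hiW]; linarith
    · rw [if_neg hi]
  have step0 : quasiVol (fun x => hkVar0On f x) S 0 a b
      = ∑ T ∈ S.powerset, (-1 : ℝ) ^ T.card *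
          ∑ U ∈ (Finset.univ : Finset (Fin d)).powerset.erase ∅,
            vitaliVar f U 0 0 (xw T) := by
    rfl
  rw [step0]
  have step1 : ∑ T ∈ S.powerset, (-1 : ℝ) ^ T.card *
        ∑ U ∈ (Finset.univ : Finset (Fin d)).powerset.erase ∅,
          vitaliVar f U 0 0 (xw T)
      = ∑ U ∈ (Finset.univ : Finset (Fin d)).powerset.erase ∅,
          ∑ T ∈ S.powerset, (-1 : ℝ) ^ T.card * vitaliVar f U 0 0 (xw T) := by
    rw [Finset.sum_comm]
    refine Finset.sum_congr rfl fun T _ => ?_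
    rw [Finset.mul_sum]
  rw [step1]
  have hSmem : S ∈ (Finset.univ : Finset (Fin d)).powerset.erase ∅ :=
    Finset.mem_erase.2 ⟨hS.ne_empty, Finset.mem_powerset.2 (Finset.subset_univ S)⟩
  have hvanish : ∀ U ∈ (Finset.univ : Finset (Fin d)).powerset.erase ∅, U ≠ S →
      ∑ T ∈ S.powerset, (-1 : ℝ) ^ T.card * vitaliVar f U 0 0 (xw T) = 0 := by
    intro U hU hUS
    have hUne : U.Nonempty := Finset.nonempty_iff_ne_empty.2 (Finset.mem_erase.1 hU).1
    by_cases hUsub : U ⊆ S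
    · -- U ⊊ S : inner alternating sum vanishes
      have hcong : ∀ T, vitaliVar f U 0 0 (xw T) = vitaliVar f U 0 0 (xw (T ∩ U)) := by
        intro T
        refine vitaliVar_congr f U 0 _ _ _ _ (fun i _ => rfl) ?_
        intro i hiU
        have hiS := hUsub hiU
        rw [hxw]
        dsimp only
        rw [if_pos hiS, if_pos hiS]
        have : i ∈ T ↔ i ∈ T ∩ U := by
          rw [Finset.mem_inter]
          exact ⟨fun h => ⟨h, hiU⟩, fun h => h.1⟩
        by_cases hiT : i ∈ T
        · rw [if_pos hiT, if_pos (this.1 hiT)]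
        · rw [if_neg hiT, if_neg (fun h => hiT (this.2 h))]
      rw [Finset.sum_congr rfl fun T _ => by rw [hcong T]]
      have hbij : ∑ T ∈ S.powerset, (-1 : ℝ) ^ T.card * vitaliVar f U 0 0 (xw (T ∩ U))
          = ∑ p ∈ U.powerset ×ˢ (S \ U).powerset,
              (-1 : ℝ) ^ (p.1.card + p.2.card) * vitaliVar f U 0 0 (xw p.1) := by
        refine Finset.sum_nbij' (fun T => (T ∩ U, T \ U)) (fun p => p.1 ∪ p.2)
          ?_ ?_ ?_ ?_ ?_
        · intro T hT
          have hTS := Finset.mem_powerset.1 hT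
          refine Finset.mem_product.2 ⟨Finset.mem_powerset.2 Finset.inter_subset_right, ?_⟩
          refine Finset.mem_powerset.2 ?_
          intro i hi
          rw [Finset.mem_sdiff] at hi ⊢
          exact ⟨hTS hi.1, hi.2⟩
        · intro p hp
          rw [Finset.mem_product] at hp
          have h1 := Finset.mem_powerset.1 hp.1
          have h2 := Finset.mem_powerset.1 hp.2
          refine Finset.mem_powerset.2 (Finset.union_subset (h1.trans hUsub) ?_)
          exact h2.trans (Finset.sdiff_subset)
        · intro T hT
          have hTS := Finset.mem_powerset.1 hT
          ext i
          rw [Finset.mem_union, Finset.mem_inter, Finset.mem_sdiff]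
          constructor
          · rintro (⟨h, _⟩ | ⟨h, _⟩) <;> exact h
          · intro hi
            by_cases hiU : i ∈ U
            · exact Or.inl ⟨hi, hiU⟩
            · exact Or.inr ⟨hi, hiU⟩
        · intro p hp
          rw [Finset.mem_product] at hp
          have h1 := Finset.mem_powerset.1 hp.1
          have h2 := Finset.mem_powerset.1 hp.2
          have hdisj : ∀ i ∈ p.2, i ∉ U := fun i hi => (Finset.mem_sdiff.1 (h2 hi)).2
          refine Prod.ext ?_ ?_
          · show (p.1 ∪ p.2) ∩ U = p.1
            ext i
            rw [Finset.mem_inter, Finset.mem_union]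
            constructor
            · rintro ⟨h | h, hiU⟩
              · exact h
              · exact absurd hiU (hdisj i h)
            · intro hi
              exact ⟨Or.inl hi, h1 hi⟩
          · show (p.1 ∪ p.2) \ U = p.2
            ext i
            rw [Finset.mem_sdiff, Finset.mem_union]
            constructor
            · rintro ⟨h | h, hiU⟩
              · exact absurd (h1 h) hiU
              · exact h
            · intro hi
              exact ⟨Or.inr hi, hdisj i hi⟩
        · intro T hT
          have hTS := Finset.mem_powerset.1 hT
          have hcard : (T ∩ U).card + (T \ U).card = T.card :=
            Finset.card_inter_add_card_sdiff T U
          rw [← hcard]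
      rw [hbij, Finset.sum_product]
      refine Finset.sum_eq_zero fun W hW => ?_
      have hzero : ∑ T' ∈ (S \ U).powerset, (-1 : ℝ) ^ T'.card = 0 := by
        rw [sum_powerset_neg_one, if_neg]
        intro h
        exact hUS (Finset.Subset.antisymm hUsub (Finset.sdiff_eq_empty_iff_subset.1 h))
      calc ∑ T' ∈ (S \ U).powerset,
            (-1 : ℝ) ^ (W.card + T'.card) * vitaliVar f U 0 0 (xw W)
          = (∑ T' ∈ (S \ U).powerset, (-1 : ℝ) ^ T'.card)
              * ((-1 : ℝ) ^ W.card * vitaliVar f U 0 0 (xw W)) := by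
            rw [Finset.sum_mul]
            refine Finset.sum_congr rfl fun T' _ => ?_
            rw [pow_add]
            ring
        _ = 0 := by rw [hzero, zero_mul]
    · -- U ⊄ S : each variation degenerates
      obtain ⟨i₀, hi₀U, hi₀S⟩ := Finset.not_subset.1 hUsub
      refine Finset.sum_eq_zero fun T _ => ?_
      have hdeg : vitaliVar f U 0 0 (xw T) = 0 := by
        refine vitaliVar_degenerate f U 0 0 (xw T) (fun i _ => hxw0 T i) hi₀U ?_
        show (0 : ℝ) = xw T i₀
        rw [hxw]
        dsimp only
        rw [if_neg hi₀S]
      rw [hdeg, mul_zero]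
  rw [Finset.sum_eq_single_of_mem S hSmem hvanish]

lemma inclusion_exclusion (g : (Fin d → ℝ) → ℝ) :
    ∑ S ∈ (Finset.univ : Finset (Fin d)).powerset.erase ∅, quasiVol g S 0 0 1
      = g 1 - g 0 := by
  classical
  set χ : Finset (Fin d) → Fin d → ℝ := fun U i => if i ∈ U then 1 else 0 with hχ
  have htotal : ∑ S ∈ (Finset.univ : Finset (Fin d)).powerset, quasiVol g S 0 0 1 = g 1 := by
    have harg : ∀ S : Finset (Fin d), ∀ T ∈ S.powerset,
        (fun i => if i ∈ S then (if i ∈ T then (0 : Fin d → ℝ) i else (1 : Fin d → ℝ) i)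
          else (0 : Fin d → ℝ) i) = χ (S \ T) := by
      intro S T hT
      have hTS := Finset.mem_powerset.1 hT
      funext i
      rw [hχ]
      dsimp only
      by_cases hiS : i ∈ S
      · by_cases hiT : i ∈ T
        · rw [if_pos hiS, if_pos hiT, if_neg (fun h => (Finset.mem_sdiff.1 h).2 hiT)]
          rfl
        · rw [if_pos hiS, if_neg hiT, if_pos (Finset.mem_sdiff.2 ⟨hiS, hiT⟩)]
          rfl
      · rw [if_neg hiS, if_neg (fun h => hiS (Finset.mem_sdiff.1 h).1)]
        rfl
    have hq : ∀ S ∈ (Finset.univ : Finset (Fin d)).powerset, quasiVol g S 0 0 1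
        = ∑ T ∈ S.powerset, (-1 : ℝ) ^ T.card * g (χ (S \ T)) := by
      intro S _
      unfold quasiVol
      exact Finset.sum_congr rfl fun T hT => by rw [harg S T hT]
    rw [Finset.sum_congr rfl hq, Finset.sum_sigma']
    have hbij : ∑ x ∈ ((Finset.univ : Finset (Fin d)).powerset.sigma fun S => S.powerset),
          (-1 : ℝ) ^ x.2.card * g (χ (x.1 \ x.2))
        = ∑ y ∈ ((Finset.univ : Finset (Fin d)).powerset.sigma
            fun U => ((Finset.univ : Finset (Fin d)) \ U).powerset),
          (-1 : ℝ) ^ y.2.card * g (χ y.1) := by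
      refine Finset.sum_nbij' (fun x => ⟨x.1 \ x.2, x.2⟩) (fun y => ⟨y.1 ∪ y.2, y.2⟩)
        ?_ ?_ ?_ ?_ ?_
      · rintro ⟨S, T⟩ hx
        rw [Finset.mem_sigma] at hx ⊢
        refine ⟨Finset.mem_powerset.2 (Finset.subset_univ _), Finset.mem_powerset.2 ?_⟩
        intro i hiT
        rw [Finset.mem_sdiff]
        refine ⟨Finset.mem_univ i, fun h => (Finset.mem_sdiff.1 h).2 hiT⟩
      · rintro ⟨U, T⟩ hy
        rw [Finset.mem_sigma] at hy ⊢
        exact ⟨Finset.mem_powerset.2 (Finset.subset_univ _),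
          Finset.mem_powerset.2 Finset.subset_union_right⟩
      · rintro ⟨S, T⟩ hx
        rw [Finset.mem_sigma] at hx
        have hTS := Finset.mem_powerset.1 hx.2
        have : (S \ T) ∪ T = S := by
          ext i
          rw [Finset.mem_union, Finset.mem_sdiff]
          constructor
          · rintro (⟨h, _⟩ | h)
            · exact h
            · exact hTS h
          · intro hi
            by_cases hiT : i ∈ T
            · exact Or.inr hiT
            · exact Or.inl ⟨hi, hiT⟩
        exact Sigma.ext this (by simp)
      · rintro ⟨U, T⟩ hy
        rw [Finset.mem_sigma] at hy
        have hTU : ∀ i ∈ T, i ∉ U := fun i hi =>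
          (Finset.mem_sdiff.1 (Finset.mem_powerset.1 hy.2 hi)).2
        have : (U ∪ T) \ T = U := by
          ext i
          rw [Finset.mem_sdiff, Finset.mem_union]
          constructor
          · rintro ⟨h | h, hiT⟩
            · exact h
            · exact absurd h hiT
          · intro hi
            exact ⟨Or.inl hi, fun h => hTU i h hi⟩
        exact Sigma.ext this (by simp)
      · rintro ⟨S, T⟩ _
        rfl
    have hunsig := Finset.sum_sigma' ((Finset.univ : Finset (Fin d)).powerset)
      (fun U => ((Finset.univ : Finset (Fin d)) \ U).powerset)
      (fun U T => (-1 : ℝ) ^ T.card * g (χ U))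
    rw [hbij, ← hunsig]
    have hvanish : ∀ U ∈ (Finset.univ : Finset (Fin d)).powerset,
        U ≠ (Finset.univ : Finset (Fin d)) →
        ∑ T ∈ ((Finset.univ : Finset (Fin d)) \ U).powerset,
          (-1 : ℝ) ^ T.card * g (χ U) = 0 := by
      intro U _ hUne
      have hne : (Finset.univ : Finset (Fin d)) \ U ≠ ∅ := by
        intro h
        exact hUne ((Finset.subset_univ U).antisymm (Finset.sdiff_eq_empty_iff_subset.1 h))
      rw [← Finset.sum_mul, sum_powerset_neg_one, if_neg hne, zero_mul]
    rw [Finset.sum_eq_single_of_mem (Finset.univ : Finset (Fin d))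
      (Finset.mem_powerset.2 (Finset.subset_univ _)) hvanish]
    rw [Finset.sdiff_self, Finset.powerset_empty, Finset.sum_singleton]
    have hone : χ (Finset.univ : Finset (Fin d)) = 1 := by
      funext i
      rw [hχ]
      dsimp only
      rw [if_pos (Finset.mem_univ i)]
      rfl
    rw [hone]
    simp
  have hempty : quasiVol g ∅ 0 0 1 = g 0 := quasiVol_empty g 0 0 1
  have hadd := Finset.add_sum_erase ((Finset.univ : Finset (Fin d)).powerset)
    (fun S => quasiVol g S 0 0 1) (Finset.mem_powerset.2 (Finset.empty_subset _))
  rw [htotal] at hadd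
  rw [hempty] at hadd
  linarith

end LeonovAux

namespace LeonovAux

variable {d : ℕ}

lemma vitali_eq_of_cm (g : (Fin d → ℝ) → ℝ)
    (hcm : ∀ S : Finset (Fin d), S.Nonempty → ∀ a b : Fin d → ℝ,
      (∀ i ∈ S, 0 ≤ a i ∧ a i ≤ b i ∧ b i ≤ 1) → 0 ≤ quasiVol g S 0 a b)
    (S : Finset (Fin d)) (hS : S.Nonempty) :
    vitaliVar g S 0 0 1 = quasiVol g S 0 0 1 ∧ BddVitali g S (0 : Fin d → ℝ) 0 1 := by
  have hgs : ∀ G : Grid d S 0 1, gridSum g S 0 0 1 G = quasiVol g S 0 0 1 := by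
    intro G
    unfold gridSum
    have habs : ∀ k ∈ Fintype.piFinset (fun i => Finset.range (if i ∈ S then G.m i else 1)),
        |quasiVol g S 0 (fun i => G.t i (k i)) (fun i => G.t i (k i + 1))|
          = quasiVol g S 0 (fun i => G.t i (k i)) (fun i => G.t i (k i + 1)) := by
      intro k hk
      rw [Fintype.mem_piFinset] at hk
      refine abs_of_nonneg (hcm S hS _ _ ?_)
      intro i hi
      have hki := hk i
      rw [Finset.mem_range, if_pos hi] at hki
      have h0 := G.first i hi
      have h1 := G.last i hi
      have hz : (0 : Fin d → ℝ) i = 0 := rfl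
      have ho : (1 : Fin d → ℝ) i = 1 := rfl
      rw [hz] at h0
      rw [ho] at h1
      refine ⟨?_, ?_, ?_⟩
      · have := G.mono i hi 0 (k i) (Nat.zero_le _) (by omega)
        linarith
      · exact G.mono i hi (k i) (k i + 1) (Nat.le_succ _) hki
      · have := G.mono i hi (k i + 1) (G.m i) hki (le_refl _)
        linarith
    rw [Finset.sum_congr rfl habs,
      sum_quasiVol_cells g S 0 G.m G.t 0 1 G.first G.last]
  have hrange : Set.range (gridSum g S 0 0 1) = {quasiVol g S 0 0 1} := by
    apply Set.eq_singleton_iff_nonempty_unique_mem.2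
    constructor
    · refine range_nonempty g S 0 0 1 fun i _ => ?_
      show (0 : ℝ) ≤ 1
      norm_num
    · rintro x ⟨G, rfl⟩
      exact hgs G
  constructor
  · unfold vitaliVar
    rw [hrange, csSup_singleton]
  · unfold BddVitali
    rw [hrange]
    exact bddAbove_singleton

lemma hkVar0_eq_of_cm (g : (Fin d → ℝ) → ℝ)
    (hcm : ∀ S : Finset (Fin d), S.Nonempty → ∀ a b : Fin d → ℝ,
      (∀ i ∈ S, 0 ≤ a i ∧ a i ≤ b i ∧ b i ≤ 1) → 0 ≤ quasiVol g S 0 a b) :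
    hkVar0 g = g 1 - g 0 ∧ BddHKVar0 g := by
  have hne : ∀ S ∈ (Finset.univ : Finset (Fin d)).powerset.erase ∅, S.Nonempty :=
    fun S hS => Finset.nonempty_iff_ne_empty.2 (Finset.mem_erase.1 hS).1
  constructor
  · show hkVarOn g 0 0 1 = g 1 - g 0
    unfold hkVarOn
    rw [← inclusion_exclusion g]
    exact Finset.sum_congr rfl fun S hS => (vitali_eq_of_cm g hcm S (hne S hS)).1
  · intro S hS
    exact (vitali_eq_of_cm g hcm S (hne S hS)).2

lemma key_ineq (f : (Fin d → ℝ) → ℝ) (hbv : BddHKVar0 f) (S : Finset (Fin d))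
    (hS : S.Nonempty) (a b : Fin d → ℝ)
    (hab : ∀ i ∈ S, 0 ≤ a i ∧ a i ≤ b i ∧ b i ≤ 1) :
    |quasiVol f S 0 a b| ≤ quasiVol (fun x => hkVar0On f x) S 0 a b := by
  rw [reduction f S hS a b hab]
  refine master f S ?_ a b hab
  exact hbv S (Finset.mem_erase.2 ⟨hS.ne_empty, Finset.mem_powerset.2 (Finset.subset_univ S)⟩)

lemma hkVar0On_zero (f : (Fin d → ℝ) → ℝ) : hkVar0On f 0 = 0 := by
  show hkVarOn f 0 0 0 = 0
  unfold hkVarOn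
  refine Finset.sum_eq_zero fun S hS => ?_
  obtain ⟨i₀, hi₀⟩ := Finset.nonempty_iff_ne_empty.2 (Finset.mem_erase.1 hS).1
  exact vitaliVar_degenerate f S 0 0 0 (fun i _ => le_refl _) hi₀ rfl

end LeonovAux

open LeonovAux

/-- The HK0-variations of the two functions in Leonov's decomposition. -/
theorem stmt12 {d : ℕ} (f : (Fin d → ℝ) → ℝ) (hbv : BddHKVar0 f) :
    hkVar0 (fun x => hkVar0On f x) = hkVar0 f ∧
    hkVar0 (fun x => hkVar0On f x - f x) = hkVar0 f - f 1 + f 0 ∧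
    BddHKVar0 (fun x => hkVar0On f x) ∧
    BddHKVar0 (fun x => hkVar0On f x - f x) := by
  have cm1 : ∀ S : Finset (Fin d), S.Nonempty → ∀ a b : Fin d → ℝ,
      (∀ i ∈ S, 0 ≤ a i ∧ a i ≤ b i ∧ b i ≤ 1) →
      0 ≤ quasiVol (fun x => hkVar0On f x) S 0 a b :=
    fun S hS a b hab => le_trans (abs_nonneg _) (key_ineq f hbv S hS a b hab)
  have cm2 : ∀ S : Finset (Fin d), S.Nonempty → ∀ a b : Fin d → ℝ,
      (∀ i ∈ S, 0 ≤ a i ∧ a i ≤ b i ∧ b i ≤ 1) →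
      0 ≤ quasiVol (fun x => hkVar0On f x - f x) S 0 a b := by
    intro S hS a b hab
    rw [quasiVol_sub (fun x => hkVar0On f x) f S 0 a b]
    have h1 := key_ineq f hbv S hS a b hab
    have h2 := le_abs_self (quasiVol f S 0 a b)
    linarith
  obtain ⟨h1, hb1⟩ := hkVar0_eq_of_cm (fun x => hkVar0On f x) cm1
  obtain ⟨h2, hb2⟩ := hkVar0_eq_of_cm (fun x => hkVar0On f x - f x) cm2
  have hz : hkVar0On f 0 = 0 := hkVar0On_zero f
  have ho : hkVar0On f 1 = hkVar0 f := rfl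
  refine ⟨?_, ?_, hb1, hb2⟩
  · rw [h1, hz, ho]
    ring
  · rw [h2, hz, ho]
    ring
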